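/- Let s̃, t̃ > 0 and R = [0,s̃] × [0,t̃]. Let θ, f, y : R → ℝ satisfy: θ is continuous with |θ(s,t) − π/2| ≤ π/4 for all (s,t) ∈ R; θ_s := ∂θ/∂s exists and is continuous on R and (θ_s)_t := ∂θ_s/∂t exists and is continuous on R; f is continuous and positive on R and f_t := ∂f/∂t exists and is continuous on R; y_t := ∂y/∂t exists and is continuous on R and ∂y/∂s(s,t) = −cos θ(s,t)/f(s,t) at every point of R. Set K := max_R |(θ_s)_t|, C₁ := 1/(2 max_R f), C₂ := max_R |f_t/f²|, C₃ := 2 max_R |y_t| + 1, and M := max{ 2 s̃ K, 2(2C₃ + s̃ C₂)/(s̃ C₁) }. Then |θ(s,t₂) − θ(s,t₁)| ≤ M |t₂ − t₁| for all (s,t₁), (s,t₂) ∈ R; in particular, θ is uniformly Lipschitz continuous in the variable t on R. -/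

import Mathlib

lemma cos_gap (p q : ℝ) (hp : p ∈ Set.Icc (Real.pi/4) (3*Real.pi/4))
    (hq : q ∈ Set.Icc (Real.pi/4) (3*Real.pi/4)) (hpq : p ≤ q) :
    (1/2) * (q - p) ≤ Real.cos p - Real.cos q := by
  have hbound : ∀ x ∈ interior (Set.Icc (Real.pi/4) (3*Real.pi/4)),
      (1:ℝ)/2 ≤ deriv (fun x => -Real.cos x) x := by
    intro x hx
    rw [interior_Icc, Set.mem_Ioo] at hx
    have hd : deriv (fun x => -Real.cos x) x = Real.sin x := by
      have := ((Real.hasDerivAt_cos x).neg).deriv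
      simpa using this
    rw [hd]
    have h1 : Real.sin x = Real.cos (Real.pi/2 - x) := (Real.cos_pi_div_two_sub x).symm
    have h2 : Real.cos (Real.pi/2 - x) = Real.cos |Real.pi/2 - x| := (Real.cos_abs _).symm
    have h3 : |Real.pi/2 - x| ≤ Real.pi/4 := by
      rw [abs_le]; constructor <;> linarith [hx.1, hx.2]
    have h4 : Real.cos (Real.pi/4) ≤ Real.cos |Real.pi/2 - x| := by
      apply Real.cos_le_cos_of_nonneg_of_le_pi (abs_nonneg _) _ h3
      linarith [Real.pi_pos]
    have h5 : (1:ℝ)/2 ≤ Real.cos (Real.pi/4) := by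
      rw [Real.cos_pi_div_four]
      nlinarith [Real.sq_sqrt (by norm_num : (2:ℝ) ≥ 0), Real.sqrt_nonneg 2]
    linarith [h1, h2]
  have hcont : ContinuousOn (fun x => -Real.cos x) (Set.Icc (Real.pi/4) (3*Real.pi/4)) :=
    (Real.continuous_cos.neg).continuousOn
  have hdiff : DifferentiableOn ℝ (fun x => -Real.cos x)
      (interior (Set.Icc (Real.pi/4) (3*Real.pi/4))) :=
    (Real.differentiable_cos.neg).differentiableOn
  have h := (convex_Icc (Real.pi/4) (3*Real.pi/4)).mul_sub_le_image_sub_of_le_deriv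
    hcont hdiff hbound p hp q hq hpq
  try simp only at h
  linarith

theorem theta_lipschitz_in_t
    (sT tT : ℝ) (hsT : 0 < sT) (htT : 0 < tT)
    (R : Set (ℝ × ℝ)) (hR : R = Set.Icc 0 sT ×ˢ Set.Icc 0 tT)
    (θ f y θs θst ft yt : ℝ × ℝ → ℝ)
    (hθc : ContinuousOn θ R)
    (hθnear : ∀ p ∈ R, |θ p - Real.pi / 2| ≤ Real.pi / 4)
    (hθs : ∀ p ∈ R, HasDerivWithinAt (fun a => θ (a, p.2)) (θs p)
      (Set.Icc 0 sT) p.1)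
    (hθsc : ContinuousOn θs R)
    (hθst : ∀ p ∈ R, HasDerivWithinAt (fun b => θs (p.1, b)) (θst p)
      (Set.Icc 0 tT) p.2)
    (hθstc : ContinuousOn θst R)
    (hfc : ContinuousOn f R) (hfpos : ∀ p ∈ R, 0 < f p)
    (hft : ∀ p ∈ R, HasDerivWithinAt (fun b => f (p.1, b)) (ft p)
      (Set.Icc 0 tT) p.2)
    (hftc : ContinuousOn ft R)
    (hyt : ∀ p ∈ R, HasDerivWithinAt (fun b => y (p.1, b)) (yt p)
      (Set.Icc 0 tT) p.2)
    (hytc : ContinuousOn yt R)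
    (hys : ∀ p ∈ R, HasDerivWithinAt (fun a => y (a, p.2))
      (-Real.cos (θ p) / f p) (Set.Icc 0 sT) p.1)
    (K Fmax C₂ Ymax : ℝ)
    (hK : IsGreatest ((fun p => |θst p|) '' R) K)
    (hFmax : IsGreatest (f '' R) Fmax)
    (hC₂ : IsGreatest ((fun p => |ft p / f p ^ 2|) '' R) C₂)
    (hYmax : IsGreatest ((fun p => |yt p|) '' R) Ymax)
    (C₁ C₃ M : ℝ)
    (hC₁ : C₁ = 1 / (2 * Fmax))
    (hC₃ : C₃ = 2 * Ymax + 1)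
    (hM : M = max (2 * sT * K) (2 * (2 * C₃ + sT * C₂) / (sT * C₁))) :
    ∀ s t₁ t₂ : ℝ, (s, t₁) ∈ R → (s, t₂) ∈ R →
      |θ (s, t₂) - θ (s, t₁)| ≤ M * |t₂ - t₁| := by
  -- basic facts
  have hmem : ∀ a ∈ Set.Icc (0:ℝ) sT, ∀ b ∈ Set.Icc (0:ℝ) tT, (a, b) ∈ R := by
    intro a ha b hb; rw [hR]; exact Set.mk_mem_prod ha hb
  have hFpos : 0 < Fmax := by
    obtain ⟨p, hp, hpe⟩ := hFmax.1
    exact hpe ▸ hfpos p hp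
  have hK0 : 0 ≤ K := by
    obtain ⟨p, hp, hpe⟩ := hK.1; exact hpe ▸ abs_nonneg _
  have hC₂0 : 0 ≤ C₂ := by
    obtain ⟨p, hp, hpe⟩ := hC₂.1; exact hpe ▸ abs_nonneg _
  have hY0 : 0 ≤ Ymax := by
    obtain ⟨p, hp, hpe⟩ := hYmax.1; exact hpe ▸ abs_nonneg _
  have hC₁pos : 0 < C₁ := by rw [hC₁]; positivity
  have hθrange : ∀ p ∈ R, θ p ∈ Set.Icc (Real.pi/4) (3*Real.pi/4) := by
    intro p hp
    have := abs_le.1 (hθnear p hp)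
    constructor <;> [linarith [this.1]; linarith [this.2]]
  intro s t₁ t₂ h₁ h₂
  -- key one-sided estimate
  have key : ∀ u v : ℝ, (s, u) ∈ R → (s, v) ∈ R → θ (s, u) ≤ θ (s, v) →
      θ (s, v) - θ (s, u) ≤ M * |v - u| := by
    intro u v hu hv huv
    have hu' := hu; have hv' := hv
    rw [hR] at hu' hv'
    have hsm : s ∈ Set.Icc (0:ℝ) sT := (Set.mem_prod.mp hu').1
    have hum : u ∈ Set.Icc (0:ℝ) tT := (Set.mem_prod.mp hu').2
    have hvm : v ∈ Set.Icc (0:ℝ) tT := (Set.mem_prod.mp hv').2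
    set Δ := |v - u| with hΔ
    have hΔ0 : 0 ≤ Δ := abs_nonneg _
    set dd := θ (s, v) - θ (s, u) with hdd
    have hdd0 : 0 ≤ dd := by simp [hdd]; linarith
    -- |θs(a,v) - θs(a,u)| ≤ K * Δ
    have hθsdiff : ∀ a ∈ Set.Icc (0:ℝ) sT, |θs (a, v) - θs (a, u)| ≤ K * Δ := by
      intro a ha
      have := Convex.norm_image_sub_le_of_norm_hasDerivWithin_le
        (f := fun b => θs (a, b)) (f' := fun b => θst (a, b)) (s := Set.Icc (0:ℝ) tT)
        (fun b hb => hθst (a, b) (hmem a ha b hb))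
        (fun b hb => by
          rw [Real.norm_eq_abs]
          exact hK.2 ⟨(a, b), hmem a ha b hb, rfl⟩)
        (convex_Icc _ _) hum hvm
      simpa [Real.norm_eq_abs] using this
    -- g stays near its value at s
    have hgdiff : ∀ a ∈ Set.Icc (0:ℝ) sT,
        |(θ (a, v) - θ (a, u)) - dd| ≤ (K * Δ) * sT := by
      intro a ha
      have hmvt := Convex.norm_image_sub_le_of_norm_hasDerivWithin_le
        (f := fun a => θ (a, v) - θ (a, u))
        (f' := fun a => θs (a, v) - θs (a, u)) (s := Set.Icc (0:ℝ) sT)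
        (fun a ha => ((hθs (a, v) (hmem a ha v hvm)).sub (hθs (a, u) (hmem a ha u hum))))
        (fun a ha => by rw [Real.norm_eq_abs]; exact hθsdiff a ha)
        (convex_Icc _ _) hsm ha
      rw [Real.norm_eq_abs, Real.norm_eq_abs] at hmvt
      have has : |a - s| ≤ sT := by
        have h1 := ha.1; have h2 := ha.2
        have h3 := hsm.1; have h4 := hsm.2
        rw [abs_le]
        constructor <;> [linarith; linarith]
      calc |(θ (a, v) - θ (a, u)) - dd| ≤ K * Δ * |a - s| := hmvt
        _ ≤ (K * Δ) * sT := by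
            apply mul_le_mul_of_nonneg_left has (by positivity)
    clear_value dd Δ
    rcases le_or_gt dd (2 * sT * K * Δ) with hcase | hcase
    · -- easy case
      calc dd ≤ 2 * sT * K * Δ := hcase
        _ ≤ M * Δ := by
            apply mul_le_mul_of_nonneg_right _ hΔ0
            rw [hM]; exact le_max_left _ _
    · -- main case: dd > 2 sT K Δ ≥ 0, so dd > 0
      have hddpos : 0 < dd := lt_of_le_of_lt (by positivity) hcase
      -- g bounded below by dd/2
      have hglow : ∀ a ∈ Set.Icc (0:ℝ) sT, dd / 2 ≤ θ (a, v) - θ (a, u) := by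
        intro a ha
        have := abs_le.1 (hgdiff a ha)
        nlinarith [this.1]
      -- the cosine difference bound
      have hcosd : ∀ a ∈ Set.Icc (0:ℝ) sT,
          dd / 4 ≤ Real.cos (θ (a, u)) - Real.cos (θ (a, v)) := by
        intro a ha
        have h1 := cos_gap (θ (a, u)) (θ (a, v))
          (hθrange _ (hmem a ha u hum)) (hθrange _ (hmem a ha v hvm))
          (by linarith [hglow a ha, hddpos])
        have := hglow a ha
        linarith
      -- bound on |1/f(a,u) - 1/f(a,v)|
      have hinv : ∀ a ∈ Set.Icc (0:ℝ) sT,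
          |(f (a, u))⁻¹ - (f (a, v))⁻¹| ≤ C₂ * Δ := by
        intro a ha
        have := Convex.norm_image_sub_le_of_norm_hasDerivWithin_le
          (f := fun b => (f (a, b))⁻¹)
          (f' := fun b => -ft (a, b) / f (a, b) ^ 2) (s := Set.Icc (0:ℝ) tT)
          (fun b hb => (hft (a, b) (hmem a ha b hb)).inv
            (ne_of_gt (hfpos _ (hmem a ha b hb))))
          (fun b hb => by
            simp only [Real.norm_eq_abs, neg_div, abs_neg]
            exact hC₂.2 ⟨(a, b), hmem a ha b hb, rfl⟩)
          (convex_Icc _ _) hum hvm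
        rw [abs_sub_comm, hΔ]
        simpa [Real.norm_eq_abs] using this
      -- pointwise lower bound on the derivative of h
      have hdlow : ∀ a ∈ Set.Icc (0:ℝ) sT,
          C₁ * dd / 2 - C₂ * Δ ≤
            Real.cos (θ (a, u)) / f (a, u) - Real.cos (θ (a, v)) / f (a, v) := by
        intro a ha
        have hfu := hfpos _ (hmem a ha u hum)
        have hfv := hfpos _ (hmem a ha v hvm)
        have hfuM : f (a, u) ≤ Fmax := hFmax.2 ⟨(a, u), hmem a ha u hum, rfl⟩
        have heq : Real.cos (θ (a, u)) / f (a, u) - Real.cos (θ (a, v)) / f (a, v)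
            = (Real.cos (θ (a, u)) - Real.cos (θ (a, v))) / f (a, u)
              + Real.cos (θ (a, v)) * ((f (a, u))⁻¹ - (f (a, v))⁻¹) := by
          ring
        have ht1 : C₁ * dd / 2 ≤ (Real.cos (θ (a, u)) - Real.cos (θ (a, v))) / f (a, u) := by
          have h1 : C₁ * dd / 2 = (dd / 4) / Fmax := by rw [hC₁]; ring
          rw [h1]
          apply div_le_div₀ (by linarith [hcosd a ha, hddpos]) (hcosd a ha) hfu hfuM
        have ht2 : |Real.cos (θ (a, v)) * ((f (a, u))⁻¹ - (f (a, v))⁻¹)| ≤ C₂ * Δ := by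
          rw [abs_mul]
          calc |Real.cos (θ (a, v))| * |(f (a, u))⁻¹ - (f (a, v))⁻¹|
              ≤ 1 * (C₂ * Δ) :=
                mul_le_mul (Real.abs_cos_le_one _) (hinv a ha) (abs_nonneg _) one_pos.le
            _ = C₂ * Δ := one_mul _
        have := abs_le.1 ht2
        rw [heq]
        linarith [this.1]
      -- apply the mean value inequality to h(a) = y(a,v) - y(a,u)
      have hder : ∀ a ∈ Set.Icc (0:ℝ) sT,
          HasDerivWithinAt (fun a => y (a, v) - y (a, u))
            (Real.cos (θ (a, u)) / f (a, u) - Real.cos (θ (a, v)) / f (a, v))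
            (Set.Icc 0 sT) a := by
        intro a ha
        have h1 := (hys (a, v) (hmem a ha v hvm)).sub (hys (a, u) (hmem a ha u hum))
        convert h1 using 1
        all_goals first | rfl | ring
      have hmono := (convex_Icc (0:ℝ) sT).mul_sub_le_image_sub_of_le_deriv
        (f := fun a => y (a, v) - y (a, u)) (C := C₁ * dd / 2 - C₂ * Δ)
        (fun a ha => (hder a ha).continuousWithinAt)
        (by
          rw [interior_Icc]
          intro a ha
          exact ((hder a (Set.Ioo_subset_Icc_self ha)).hasDerivAt
            (Icc_mem_nhds ha.1 ha.2)).differentiableAt.differentiableWithinAt)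
        (by
          rw [interior_Icc]
          intro a ha
          have hd := ((hder a (Set.Ioo_subset_Icc_self ha)).hasDerivAt
            (Icc_mem_nhds ha.1 ha.2)).deriv
          rw [hd]
          exact hdlow a (Set.Ioo_subset_Icc_self ha))
        0 (Set.left_mem_Icc.2 hsT.le) sT (Set.right_mem_Icc.2 hsT.le) hsT.le
      -- bound |y(a,v) - y(a,u)| ≤ Ymax Δ
      have hyb : ∀ a ∈ Set.Icc (0:ℝ) sT, |y (a, v) - y (a, u)| ≤ Ymax * Δ := by
        intro a ha
        have := Convex.norm_image_sub_le_of_norm_hasDerivWithin_le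
          (f := fun b => y (a, b)) (f' := fun b => yt (a, b)) (s := Set.Icc (0:ℝ) tT)
          (fun b hb => hyt (a, b) (hmem a ha b hb))
          (fun b hb => by
            rw [Real.norm_eq_abs]
            exact hYmax.2 ⟨(a, b), hmem a ha b hb, rfl⟩)
          (convex_Icc _ _) hum hvm
        rw [hΔ]
        simpa [Real.norm_eq_abs] using this
      have hy0 := abs_le.1 (hyb 0 (Set.left_mem_Icc.2 hsT.le))
      have hyT := abs_le.1 (hyb sT (Set.right_mem_Icc.2 hsT.le))
      -- combine: (C₁ dd/2 - C₂ Δ) * sT ≤ 2 Ymax Δ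
      have hfinal : (C₁ * dd / 2 - C₂ * Δ) * sT ≤ 2 * Ymax * Δ := by
        have : (C₁ * dd / 2 - C₂ * Δ) * (sT - 0)
            ≤ (y (sT, v) - y (sT, u)) - (y (0, v) - y (0, u)) := hmono
        nlinarith [hy0.1, hy0.2, hyT.1, hyT.2]
      -- conclude dd ≤ M Δ
      have hB : dd ≤ (2 * (2 * C₃ + sT * C₂) / (sT * C₁)) * Δ := by
        rw [div_mul_eq_mul_div, le_div_iff₀ (by positivity : 0 < sT * C₁), hC₃]
        nlinarith [hfinal, mul_nonneg hY0 hΔ0, hΔ0]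
      calc dd ≤ (2 * (2 * C₃ + sT * C₂) / (sT * C₁)) * Δ := hB
        _ ≤ M * Δ := by
            apply mul_le_mul_of_nonneg_right _ hΔ0
            rw [hM]; exact le_max_right _ _
  rcases le_total (θ (s, t₁)) (θ (s, t₂)) with hle | hle
  · rw [abs_of_nonneg (by linarith)]
    exact key t₁ t₂ h₁ h₂ hle
  · rw [abs_sub_comm, abs_of_nonneg (by linarith)]
    have := key t₂ t₁ h₂ h₁ hle
    rwa [abs_sub_comm] at this
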